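/- Work in the good-parity setting, integer case. Let n₀, y₀ ∈ ℕ with n₀ ≥ 1, and let (𝔪, ε) be the signed symmetric multisegment with 𝔪 = n₀·[0,0] + Σ_{y=1}^{y₀} [−y,y] and with signs satisfying ε([−y,y])·ε([−y+1,y−1]) = −1 for all 1 ≤ y ≤ y₀ (no condition on ε([0,0])). Then AD(𝔪, ε) = (𝔪', ε'), where: (1) if y₀ = 0, then 𝔪' = 𝔪 and ε'([0,0]) = (−1)^{n₀+1}·ε([0,0]); (2) if n₀ is odd and y₀ ≠ 0, then (𝔪', ε') = (𝔪, ε); (3) if n₀ is even and y₀ ≠ 0, then 𝔪' = 𝔪 − [0,0] − [−y₀,y₀] + [−y₀,0] + [0,y₀] and ε'([−y,y]) = −ε([−y,y]) for all 0 ≤ y < y₀. -/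

import Mathlib

namespace AZ

/-- A segment in doubled coordinates: the pair `(a, b)` represents the segment
`[a/2, b/2]` whose endpoints lie in `(1/2)ℤ`.  Thus the end `e(Δ)` is `Δ.2 / 2`,
the beginning `b(Δ)` is `Δ.1 / 2`, `Δ` is centered iff `Δ.1 + Δ.2 = 0`, and
`c(Δ) = 1/2` iff `Δ.1 + Δ.2 = 2`. -/
abbrev Seg := ℤ × ℤ

namespace Seg

/-- Well-formedness of a segment: `a ≤ b` and `a ≡ b [ZMOD 2]`, i.e. `b - a ∈ 2ℕ`. -/
def WF (Δ : Seg) : Prop := Δ.1 ≤ Δ.2 ∧ Δ.1 % 2 = Δ.2 % 2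

/-- The dual (contragredient) segment `Δ∨ = [−b, −a]`. -/
def dual (Δ : Seg) : Seg := (-Δ.2, -Δ.1)

/-- `Δ⁻` : the segment with its end removed. -/
def trimEnd (Δ : Seg) : Seg := (Δ.1, Δ.2 - 2)

/-- `⁻Δ` : the segment with its beginning removed. -/
def trimBeg (Δ : Seg) : Seg := (Δ.1 + 2, Δ.2)

/-- `⁺Δ` : the segment with its beginning extended. -/
def extBeg (Δ : Seg) : Seg := (Δ.1 - 2, Δ.2)

/-- The order on segments: `[x₁,y₁] ≤ [x₂,y₂]` iff `x₁ < x₂`, or `x₁ = x₂` and `y₁ ≥ y₂`. -/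
def le (Δ₁ Δ₂ : Seg) : Prop := Δ₁.1 < Δ₂.1 ∨ (Δ₁.1 = Δ₂.1 ∧ Δ₂.2 ≤ Δ₁.2)

end Seg

/-- Labels `≤0`, `=0`, `≥0` for labeled segments. -/
inductive Label
  | le0 | eq0 | ge0
deriving DecidableEq

/-- Numerical index of a label, used to order the labels `≤0 < =0 < ≥0`. -/
def Label.idx : Label → ℕ
  | .le0 => 0
  | .eq0 => 1
  | .ge0 => 2

/-- A labeled segment: a segment together with a label. -/
abbrev LSeg := Seg × Label

namespace LSeg

/-- The order `⪯` on labeled segments: segments labeled `≤0` precede those labeled `=0`,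
which precede those labeled `≥0`; for equal labels `≥0` or `≤0` one compares the segments,
and for label `=0` one compares the ends. -/
def le (Λ₁ Λ₂ : LSeg) : Prop :=
  Λ₁.2.idx < Λ₂.2.idx ∨
    (Λ₁.2 = Λ₂.2 ∧
      if Λ₁.2 = Label.eq0 then Λ₁.1.2 ≤ Λ₂.1.2 else Seg.le Λ₁.1 Λ₂.1)

/-- The strict order `≺` on labeled segments. -/
def lt (Λ₁ Λ₂ : LSeg) : Prop := LSeg.le Λ₁ Λ₂ ∧ Λ₁ ≠ Λ₂

/-- The contragredient of a labeled segment: for a centered segment the label `≤0`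
becomes `≥0` and the labels `=0`, `≥0` are kept; for a non-centered segment the
label is flipped. -/
def dual (Λ : LSeg) : LSeg :=
  (Seg.dual Λ.1,
    if Λ.1.1 + Λ.1.2 = 0 then (if Λ.2 = Label.le0 then Label.ge0 else Λ.2)
    else
      match Λ.2 with
      | Label.le0 => Label.ge0
      | Label.eq0 => Label.eq0
      | Label.ge0 => Label.le0)

end LSeg

/-- The forced label of a non-centered segment. -/
def forcedLabel (Δ : Seg) : Label := if 0 < Δ.1 + Δ.2 then Label.ge0 else Label.le0

/-- The labeling `s(𝔪)` of a multisegment: each non-centered segment gets its forced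
label; a centered segment of multiplicity `m` contributes `⌊m/2⌋` copies labeled `≤0`,
`⌊m/2⌋` copies labeled `≥0`, and `m − 2⌊m/2⌋` copies labeled `=0`. -/
def smap (m : Multiset Seg) : Multiset LSeg :=
  (m.filter fun Δ => ¬ Δ.1 + Δ.2 = 0).map (fun Δ => (Δ, forcedLabel Δ)) +
    (m.toFinset.filter fun Δ => Δ.1 + Δ.2 = 0).val.bind (fun Δ =>
      Multiset.replicate (m.count Δ / 2) (Δ, Label.le0) +
        Multiset.replicate (m.count Δ / 2) (Δ, Label.ge0) +
        Multiset.replicate (m.count Δ % 2) (Δ, Label.eq0))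

/-- A labeled segment is special (the initial sequence stops there): `[0,0]` labeled
`≥0` or `=0` in the integer case; `[1/2,1/2]`, or `[−1/2,1/2]` labeled `≥0` or `=0`
with `ε([−1/2,1/2]) = −1`, in the half-integer case. -/
def Special (ε : Seg → ℤ) (Λ : LSeg) : Prop :=
  (Λ.1 = ((0 : ℤ), (0 : ℤ)) ∧ (Λ.2 = Label.ge0 ∨ Λ.2 = Label.eq0)) ∨
    Λ.1 = ((1 : ℤ), (1 : ℤ)) ∨
      (Λ.1 = ((-1 : ℤ), (1 : ℤ)) ∧ (Λ.2 = Label.ge0 ∨ Λ.2 = Label.eq0) ∧ ε (-1, 1) = -1)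

instance (ε : Seg → ℤ) (Λ : LSeg) : Decidable (Special ε Λ) := by
  unfold Special; infer_instance

/-- The condition for `next` to be a successor of `cur` in the initial sequence:
`next ≺ cur`, `e(next) = e(cur) − 1`, and opposite signs when both are centered. -/
def Succ (ε : Seg → ℤ) (cur next : LSeg) : Prop :=
  LSeg.lt next cur ∧ next.1.2 = cur.1.2 - 2 ∧
    (cur.1.1 + cur.1.2 = 0 → next.1.1 + next.1.2 = 0 → ε next.1 = - ε cur.1)

/-- `Δ 1, …, Δ l` is the initial sequence in the algorithm for `(m, ε)`:
`Δ 1` is the `⪯`-largest element of `s(m)` with maximal end; recursively,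
`Δ (j+1)` is the `⪯`-largest successor of `Δ j`; the sequence stops when the
current segment is special or no successor exists. -/
structure IsInitSeq (m : Multiset Seg) (ε : Seg → ℤ) (Δ : ℕ → LSeg) (l : ℕ) : Prop where
  one_le : 1 ≤ l
  mem : ∀ j, 1 ≤ j → j ≤ l → Δ j ∈ smap m
  first_max_end : ∀ Λ ∈ smap m, Λ.1.2 ≤ (Δ 1).1.2
  first_max : ∀ Λ ∈ smap m, Λ.1.2 = (Δ 1).1.2 → LSeg.le Λ (Δ 1)
  not_special : ∀ j, 1 ≤ j → j < l → ¬ Special ε (Δ j)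
  succ : ∀ j, 1 ≤ j → j < l → Succ ε (Δ j) (Δ (j + 1))
  succ_max : ∀ j, 1 ≤ j → j < l → ∀ Λ ∈ smap m, Succ ε (Δ j) Λ → LSeg.le Λ (Δ (j + 1))
  last : Special ε (Δ l) ∨ ∀ Λ ∈ smap m, ¬ Succ ε (Δ l) Λ

/-- The sign `ε₀`: `−1` if the sequence stopped at a special segment, `1` otherwise. -/
def eps0 (ε : Seg → ℤ) (Δ : ℕ → LSeg) (l : ℕ) : ℤ :=
  if Special ε (Δ l) then -1 else 1

/-- The number `n₀` of centered segments of `m`. -/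
def nCentered (m : Multiset Seg) : ℕ := (m.filter fun Δ => Δ.1 + Δ.2 = 0).card

/-- The sign `ε₁` of the centered segment `𝔪₁` in the case `ε₀ = −1`:
`(−1)^(n₀+1)·ε([0,0])` in the integer case, `(−1)^(n₀)` in the half-integer case. -/
def epsOne (m : Multiset Seg) (ε : Seg → ℤ) (Δ : ℕ → LSeg) : ℤ :=
  if (Δ 1).1.2 % 2 = 0 then (-1) ^ (nCentered m + 1) * ε (0, 0)
  else (-1) ^ nCentered m

/-- The signed multisegment `𝔪₁`: if `ε₀ = −1` it is the centered segment
`[−e(Δ₁), e(Δ₁)]` with sign `ε₁`; otherwise it is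
`[e(Δ_l), e(Δ₁)] + [−e(Δ₁), −e(Δ_l)]` (non-centered segments carry sign `1`). -/
def mOne (m : Multiset Seg) (ε : Seg → ℤ) (Δ : ℕ → LSeg) (l : ℕ) : Multiset (Seg × ℤ) :=
  if Special ε (Δ l) then {((-(Δ 1).1.2, (Δ 1).1.2), epsOne m ε Δ)}
  else {(((Δ l).1.2, (Δ 1).1.2), 1), ((-(Δ 1).1.2, -(Δ l).1.2), 1)}

/-- The labeled copies `Δ 1, …, Δ l` whose end gets removed. -/
def DEnd (Δ : ℕ → LSeg) (l : ℕ) : Multiset LSeg := (Finset.Icc 1 l).val.map Δ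

/-- The labeled copies (the contragredients of the `Δ j`) whose beginning gets removed. -/
def DBeg (Δ : ℕ → LSeg) (l : ℕ) : Multiset LSeg := (DEnd Δ l).map LSeg.dual

/-- The labeled copies trimmed on both sides. -/
def DBoth (Δ : ℕ → LSeg) (l : ℕ) : Multiset LSeg := DEnd Δ l ∩ DBeg Δ l

/-- The multisegment `𝔪#`: remove the ends of the `Δ j` and the beginnings of their
contragredients (one labeled copy each, both trims if the copy occurs in both lists),
keep all other copies, and discard empty segments. -/
def mHash (m : Multiset Seg) (Δ : ℕ → LSeg) (l : ℕ) : Multiset Seg :=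
  (smap m - DEnd Δ l - (DBeg Δ l - DBoth Δ l)).map Prod.fst +
    ((DBoth Δ l).map (fun Λ => ((Λ.1.1 + 2, Λ.1.2 - 2) : Seg)) +
        (DEnd Δ l - DBoth Δ l).map (fun Λ => ((Λ.1.1, Λ.1.2 - 2) : Seg)) +
        (DBeg Δ l - DBoth Δ l).map (fun Λ => ((Λ.1.1 + 2, Λ.1.2) : Seg))).filter
      fun Δ0 => Δ0.1 ≤ Δ0.2

/-- The trimmed segment `Λ_{i_j}#` obtained from `Δ j`. -/
def trimAt (Δ : ℕ → LSeg) (l : ℕ) (j : ℕ) : Seg :=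
  if Δ j ∈ DBeg Δ l then ((Δ j).1.1 + 2, (Δ j).1.2 - 2)
  else ((Δ j).1.1, (Δ j).1.2 - 2)

/-- The sign function `ε#` on (centered) segments of `𝔪#`. -/
def epsHash (m : Multiset Seg) (ε : Seg → ℤ) (Δ : ℕ → LSeg) (l : ℕ) : Seg → ℤ :=
  fun Δ0 =>
    if ∃ j ∈ Finset.Icc 1 l, ((Δ j).1.1 + (Δ j).1.2 = 0 ∧ trimAt Δ l j = Δ0) then
      eps0 ε Δ l * ε (Δ0.1 - 2, Δ0.2 + 2)
    else if ∃ j ∈ Finset.Icc 1 l,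
        ((Δ j).1.1 + (Δ j).1.2 = 2 ∧ trimAt Δ l j = Δ0 ∧ Δ0 ∉ m) then
      eps0 ε Δ l
    else if ∃ j ∈ Finset.Icc 1 l,
        ((Δ j).1.1 + (Δ j).1.2 = 2 ∧ trimAt Δ l j = Δ0 ∧ Δ0 ∈ m) then
      -(eps0 ε Δ l) * ε Δ0
    else eps0 ε Δ l * ε Δ0

/-- The good-parity duality algorithm `AD`, as a relation between the input `(m, ε)`
and the output signed multisegment: `AD(0) = 0` and
`AD(𝔪, ε) = (𝔪₁, ε₁) + AD(𝔪#, ε#)`. -/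
inductive IsAD : Multiset Seg → (Seg → ℤ) → Multiset (Seg × ℤ) → Prop
  | zero (ε : Seg → ℤ) : IsAD 0 ε 0
  | step {m : Multiset Seg} {ε : Seg → ℤ} {Δ : ℕ → LSeg} {l : ℕ} {d : Multiset (Seg × ℤ)}
      (hm : m ≠ 0) (hseq : IsInitSeq m ε Δ l)
      (hrec : IsAD (mHash m Δ l) (epsHash m ε Δ l) d) :
      IsAD m ε (mOne m ε Δ l + d)

/-- A valid signed symmetric multisegment in the good-parity setting. -/
structure GoodInput (m : Multiset Seg) (ε : Seg → ℤ) : Prop where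
  wf : ∀ Δ0 ∈ m, Seg.WF Δ0
  symm : m.map Seg.dual = m
  parity : ∀ Δ₁ ∈ m, ∀ Δ₂ ∈ m, Δ₁.2 % 2 = Δ₂.2 % 2
  sign : ∀ Δ0, ε Δ0 = 1 ∨ ε Δ0 = -1

open Multiset

/-- the segment `[-y, y]` in doubled coordinates -/
abbrev fseg (y : ℕ) : Seg := (-(2 * (y : ℤ)), 2 * (y : ℤ))

abbrev zseg : Seg := ((0:ℤ), (0:ℤ))

abbrev Mms (n₀ y₀ : ℕ) : Multiset Seg :=
  Multiset.replicate n₀ zseg + (Finset.Icc 1 y₀).val.map (fun y => fseg y)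

def Sms (n₀ y₀ : ℕ) : Multiset LSeg :=
  Multiset.replicate (n₀/2) (zseg, Label.le0) +
  Multiset.replicate (n₀/2) (zseg, Label.ge0) +
  Multiset.replicate (n₀%2) (zseg, Label.eq0) +
  (Finset.Icc 1 y₀).val.map (fun y => (fseg y, Label.eq0))

lemma fseg_zero : fseg 0 = zseg := by norm_num

lemma fseg_ne_zseg {y : ℕ} (hy : 1 ≤ y) : fseg y ≠ zseg := by
  simp only [fseg, zseg, ne_eq, Prod.mk.injEq, not_and]
  intro h; omega

lemma fseg_inj : Function.Injective fseg := by
  intro a b h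
  simp only [fseg, Prod.mk.injEq] at h
  omega

lemma count_zseg_M (n₀ y₀ : ℕ) : Multiset.count zseg (Mms n₀ y₀) = n₀ := by
  rw [Multiset.count_add, Multiset.count_replicate_self]
  have : Multiset.count zseg ((Finset.Icc 1 y₀).val.map (fun y => fseg y)) = 0 := by
    rw [Multiset.count_eq_zero]
    simp only [Multiset.mem_map, Finset.mem_val, Finset.mem_Icc]
    rintro ⟨y, ⟨hy1, hy2⟩, h⟩
    exact fseg_ne_zseg hy1 h
  omega

lemma count_fseg_M (n₀ y₀ : ℕ) {y : ℕ} (h1 : 1 ≤ y) (h2 : y ≤ y₀) :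
    Multiset.count (fseg y) (Mms n₀ y₀) = 1 := by
  rw [Multiset.count_add]
  have hz : Multiset.count (fseg y) (Multiset.replicate n₀ zseg) = 0 := by
    rw [Multiset.count_replicate, if_neg (fun h => fseg_ne_zseg h1 h.symm)]
  have hm : Multiset.count (fseg y) ((Finset.Icc 1 y₀).val.map (fun y => fseg y)) = 1 := by
    apply Multiset.count_eq_one_of_mem
    · exact Multiset.Nodup.map fseg_inj (Finset.Icc 1 y₀).nodup
    · simp only [Multiset.mem_map, Finset.mem_val, Finset.mem_Icc]
      exact ⟨y, ⟨h1, h2⟩, rfl⟩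
  omega

lemma smap_Mms (n₀ y₀ : ℕ) (hn : 1 ≤ n₀) : smap (Mms n₀ y₀) = Sms n₀ y₀ := by
  unfold smap
  have hfil : Multiset.filter (fun Δ => ¬ Δ.1 + Δ.2 = 0) (Mms n₀ y₀) = 0 := by
    rw [Multiset.filter_eq_nil]
    intro a ha
    simp only [Multiset.mem_add, Multiset.mem_replicate, Multiset.mem_map, Finset.mem_val] at ha
    rcases ha with ⟨-, rfl⟩ | ⟨y, -, rfl⟩ <;> simp [zseg, fseg]
  have hfil2 : (Finset.filter (fun Δ => Δ.1 + Δ.2 = 0) (Mms n₀ y₀).toFinset) = (Mms n₀ y₀).toFinset := by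
    apply Finset.filter_true_of_mem
    intro a ha
    rw [Multiset.mem_toFinset] at ha
    simp only [Multiset.mem_add, Multiset.mem_replicate, Multiset.mem_map, Finset.mem_val] at ha
    rcases ha with ⟨-, rfl⟩ | ⟨y, -, rfl⟩ <;> simp [zseg, fseg]
  rw [hfil, hfil2, Multiset.map_zero, zero_add]
  have htf : (Mms n₀ y₀).toFinset = insert zseg (Finset.image fseg (Finset.Icc 1 y₀)) := by
    rw [Multiset.toFinset_add, Multiset.toFinset_replicate, if_neg (by omega : ¬ n₀ = 0)]
    rw [Multiset.toFinset_map, Finset.val_toFinset]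
    rfl
  have hnotmem : zseg ∉ Finset.image fseg (Finset.Icc 1 y₀) := by
    simp only [Finset.mem_image, Finset.mem_Icc]
    rintro ⟨y, ⟨hy1, -⟩, h⟩
    exact fseg_ne_zseg hy1 h
  rw [htf, Finset.insert_val_of_notMem hnotmem, Multiset.cons_bind]
  rw [Finset.image_val_of_injOn (Function.Injective.injOn fseg_inj), Multiset.bind_map]
  have h1 : ∀ y ∈ (Finset.Icc 1 y₀).val,
      (Multiset.replicate (Multiset.count (fseg y) (Mms n₀ y₀) / 2) ((fseg y), Label.le0) +
        Multiset.replicate (Multiset.count (fseg y) (Mms n₀ y₀) / 2) ((fseg y), Label.ge0) +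
        Multiset.replicate (Multiset.count (fseg y) (Mms n₀ y₀) % 2) ((fseg y), Label.eq0)) =
      {((fseg y), Label.eq0)} := by
    intro y hy
    simp only [Finset.mem_val, Finset.mem_Icc] at hy
    rw [count_fseg_M n₀ y₀ hy.1 hy.2]
    simp
  rw [Multiset.bind_congr h1, Multiset.bind_singleton, count_zseg_M]
  unfold Sms
  abel

lemma mem_Sms {n₀ y₀ : ℕ} {Λ : LSeg} : Λ ∈ Sms n₀ y₀ ↔
    ((Λ = (zseg, Label.le0) ∨ Λ = (zseg, Label.ge0)) ∧ 2 ≤ n₀) ∨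
    (Λ = (zseg, Label.eq0) ∧ n₀ % 2 = 1) ∨
    (∃ y, 1 ≤ y ∧ y ≤ y₀ ∧ Λ = (fseg y, Label.eq0)) := by
  simp only [Sms, Multiset.mem_add, Multiset.mem_replicate, Multiset.mem_map, Finset.mem_val,
    Finset.mem_Icc, ne_eq]
  constructor
  · rintro (((⟨h, rfl⟩ | ⟨h, rfl⟩) | ⟨h, rfl⟩) | ⟨y, ⟨hy1, hy2⟩, rfl⟩)
    · exact Or.inl ⟨Or.inl rfl, by omega⟩
    · exact Or.inl ⟨Or.inr rfl, by omega⟩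
    · exact Or.inr (Or.inl ⟨rfl, by omega⟩)
    · exact Or.inr (Or.inr ⟨y, hy1, hy2, rfl⟩)
  · rintro (⟨rfl | rfl, h⟩ | ⟨rfl, h⟩ | ⟨y, hy1, hy2, rfl⟩)
    · exact Or.inl (Or.inl (Or.inl ⟨by omega, rfl⟩))
    · exact Or.inl (Or.inl (Or.inr ⟨by omega, rfl⟩))
    · exact Or.inl (Or.inr ⟨by omega, rfl⟩)
    · exact Or.inr ⟨y, ⟨hy1, hy2⟩, rfl⟩

lemma mem_Sms_cases {n₀ y₀ : ℕ} {Λ : LSeg} (h : Λ ∈ Sms n₀ y₀) :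
    (Λ.1 = zseg ∧ Λ.1.2 = 0) ∨ ∃ y, 1 ≤ y ∧ y ≤ y₀ ∧ Λ = (fseg y, Label.eq0) := by
  rcases mem_Sms.mp h with ⟨rfl | rfl, -⟩ | ⟨rfl, -⟩ | hy
  · exact Or.inl ⟨rfl, rfl⟩
  · exact Or.inl ⟨rfl, rfl⟩
  · exact Or.inl ⟨rfl, rfl⟩
  · exact Or.inr hy

lemma mem_Sms_of_end {n₀ y₀ : ℕ} {Λ : LSeg} {c : ℕ} (hc : 1 ≤ c) (h : Λ ∈ Sms n₀ y₀)
    (he : Λ.1.2 = 2 * (c : ℤ)) : Λ = (fseg c, Label.eq0) := by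
  rcases mem_Sms_cases h with ⟨-, h2⟩ | ⟨y, hy1, hy2, rfl⟩
  · omega
  · simp only [fseg] at he ⊢
    have : y = c := by omega
    subst this; rfl

lemma not_special_fseg (ε : Seg → ℤ) {c : ℕ} (hc : 1 ≤ c) {L : Label} :
    ¬ Special ε (fseg c, L) := by
  rintro (⟨h1, -⟩ | h1 | ⟨h1, -⟩) <;>
    (simp only [fseg, Prod.mk.injEq] at h1; omega)

lemma special_zseg (ε : Seg → ℤ) {L : Label} (hL : L = Label.ge0 ∨ L = Label.eq0) :
    Special ε (zseg, L) := Or.inl ⟨rfl, hL⟩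

/-- the canonical successor element with end `2*(c-1)` when the current segment is `fseg c` -/
lemma succ_exists {n₀ y₀ : ℕ} (hn : 1 ≤ n₀) {c : ℕ} (hc1 : 1 ≤ c) (hc2 : c ≤ y₀)
    {ε : Seg → ℤ} (hε : ε (fseg (c - 1)) = - ε (fseg c)) :
    ∃ Λ ∈ Sms n₀ y₀, Succ ε (fseg c, Label.eq0) Λ := by
  rcases Nat.lt_or_ge c 2 with hc | hc
  · -- c = 1
    have hc1' : c = 1 := by omega
    subst hc1'
    refine ⟨(zseg, if n₀ % 2 = 1 then Label.eq0 else Label.le0), ?_, ?_, ?_, ?_⟩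
    · rcases Nat.even_or_odd n₀ with he | ho
      · rw [if_neg (by rcases he with ⟨k,hk⟩; omega)]
        exact mem_Sms.mpr (Or.inl ⟨Or.inl rfl, by rcases he with ⟨k,hk⟩; omega⟩)
      · rw [if_pos (Nat.odd_iff.mp ho)]
        exact mem_Sms.mpr (Or.inr (Or.inl ⟨rfl, Nat.odd_iff.mp ho⟩))
    · constructor
      · split_ifs with hpar
        · exact Or.inr ⟨rfl, by simp [fseg]⟩
        · exact Or.inl (by simp [Label.idx])
      · split_ifs <;> (intro h; rw [Prod.mk.injEq] at h; exact fseg_ne_zseg le_rfl h.1.symm)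
    · simp [fseg, zseg]
    · intro _ _
      rw [fseg_zero] at hε
      simpa [fseg] using hε
  · -- c ≥ 2
    refine ⟨(fseg (c - 1), Label.eq0), ?_, ?_, ?_, ?_⟩
    · exact mem_Sms.mpr (Or.inr (Or.inr ⟨c - 1, by omega, by omega, rfl⟩))
    · constructor
      · exact Or.inr ⟨rfl, by simp [fseg] <;> omega⟩
      · intro h; rw [Prod.mk.injEq] at h
        exact absurd (fseg_inj h.1) (by omega)
    · simp only [fseg]; omega
    · intro _ _; exact hε

lemma seq_det0 {n₀ : ℕ} (hn : 1 ≤ n₀) {ε : Seg → ℤ} {Δ : ℕ → LSeg} {l : ℕ}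
    (hseq : IsInitSeq (Mms n₀ 0) ε Δ l) :
    l = 1 ∧ Δ 1 = (zseg, if n₀ = 1 then Label.eq0 else Label.ge0) := by
  have hs := smap_Mms n₀ 0 hn
  have h1l := hseq.one_le
  have hmem : Δ 1 ∈ Sms n₀ 0 := by rw [← hs]; exact hseq.mem 1 le_rfl h1l
  have hΔ1 : Δ 1 = (zseg, if n₀ = 1 then Label.eq0 else Label.ge0) := by
    rcases Nat.lt_or_ge n₀ 2 with h2 | h2
    · have hn1 : n₀ = 1 := by omega
      rw [if_pos hn1]
      rcases mem_Sms.mp hmem with ⟨h, hh⟩ | ⟨h, -⟩ | ⟨y, hy1, hy2, -⟩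
      · omega
      · exact h
      · omega
    · rw [if_neg (by omega)]
      have hg : ((zseg, Label.ge0) : LSeg) ∈ smap (Mms n₀ 0) := by
        rw [hs]; exact mem_Sms.mpr (Or.inl ⟨Or.inr rfl, h2⟩)
      have hend : (Δ 1).1.2 = 0 := by
        rcases mem_Sms_cases hmem with ⟨-, h⟩ | ⟨y, hy1, hy2, -⟩
        · exact h
        · omega
      have hle := hseq.first_max _ hg (by simpa [zseg] using hend.symm)
      rcases hle with h | ⟨h, -⟩
      · exfalso
        cases hq : (Δ 1).2 <;> rw [hq] at h <;> simp [Label.idx] at h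
      · rcases mem_Sms_cases hmem with ⟨h1, -⟩ | ⟨y, hy1, hy2, -⟩
        · rw [← Prod.mk.eta (p := Δ 1), h1, ← h]
        · omega
  refine ⟨?_, hΔ1⟩
  by_contra hl
  exact hseq.not_special 1 le_rfl (by omega) (by
    rw [hΔ1]
    exact special_zseg ε (by split_ifs <;> simp))

lemma seq_det {n₀ y₀ : ℕ} (hn : 1 ≤ n₀) (hy : 1 ≤ y₀) {ε : Seg → ℤ} {Δ : ℕ → LSeg} {l : ℕ}
    (halt2 : ∀ y : ℕ, 1 ≤ y → y ≤ y₀ → ε (fseg (y - 1)) = - ε (fseg y))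
    (hseq : IsInitSeq (Mms n₀ y₀) ε Δ l) :
    l = y₀ + 1 ∧ (∀ j, 1 ≤ j → j ≤ y₀ → Δ j = (fseg (y₀ + 1 - j), Label.eq0)) ∧
      Δ (y₀ + 1) = (zseg, if n₀ % 2 = 1 then Label.eq0 else Label.le0) := by
  have hs := smap_Mms n₀ y₀ hn
  have h1l := hseq.one_le
  -- the "not last" step
  have notlast : ∀ j, 1 ≤ j → j ≤ y₀ → j ≤ l → Δ j = (fseg (y₀ + 1 - j), Label.eq0) → j < l := by
    intro j hj1 hjy hjl hΔj
    rcases Nat.lt_or_ge j l with h | h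
    · exact h
    exfalso
    have hlj : l = j := by omega
    rcases hseq.last with hsp | hns
    · rw [hlj, hΔj] at hsp
      exact not_special_fseg ε (by omega) hsp
    · obtain ⟨Λ, hΛm, hΛs⟩ := succ_exists hn (by omega : 1 ≤ y₀ + 1 - j)
        (by omega : y₀ + 1 - j ≤ y₀) (halt2 (y₀ + 1 - j) (by omega) (by omega))
      rw [← hΔj, ← hlj] at hΛs
      exact hns Λ (by rw [hs]; exact hΛm) hΛs
  -- the main induction
  have key : ∀ j, j ≤ y₀ → 1 ≤ j → j < l ∧ Δ j = (fseg (y₀ + 1 - j), Label.eq0) := by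
    intro j
    induction j with
    | zero => omega
    | succ k ih =>
      intro hjy hj1
      rcases Nat.eq_zero_or_pos k with rfl | hk
      · -- base case j = 1
        have hmem : Δ 1 ∈ Sms n₀ y₀ := by rw [← hs]; exact hseq.mem 1 le_rfl h1l
        have hfm : (2 : ℤ) * y₀ ≤ (Δ 1).1.2 := by
          have := hseq.first_max_end (fseg y₀, Label.eq0)
            (by rw [hs]; exact mem_Sms.mpr (Or.inr (Or.inr ⟨y₀, hy, le_rfl, rfl⟩)))
          simpa [fseg] using this
        have hΔ1 : Δ 1 = (fseg (y₀ + 1 - 1), Label.eq0) := by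
          rcases mem_Sms_cases hmem with ⟨-, h⟩ | ⟨y, hy1, hy2, hΛ⟩
          · omega
          · have : (Δ 1).1.2 = 2 * (y : ℤ) := by rw [hΛ]
            have : y = y₀ := by omega
            subst this
            rw [hΛ, Nat.add_sub_cancel]
        exact ⟨notlast 1 le_rfl hy h1l hΔ1, hΔ1⟩
      · -- inductive step
        obtain ⟨hkl, hΔk⟩ := ih (by omega) hk
        obtain ⟨hlt, hend, hsgn⟩ := hseq.succ k hk hkl
        have hmem : Δ (k+1) ∈ Sms n₀ y₀ := by rw [← hs]; exact hseq.mem (k+1) (by omega) (by omega)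
        have hend' : (Δ (k+1)).1.2 = 2 * ((y₀ - k : ℕ) : ℤ) := by
          rw [hend, hΔk]
          simp only [fseg]
          omega
        have hΔ : Δ (k+1) = (fseg (y₀ + 1 - (k+1)), Label.eq0) := by
          have h9 := mem_Sms_of_end (c := y₀ - k) (by omega) hmem hend'
          have h8 : y₀ + 1 - (k + 1) = y₀ - k := by omega
          rw [h9, h8]
        exact ⟨notlast (k+1) (by omega) hjy (by omega) hΔ, hΔ⟩
  obtain ⟨hylt, hΔy⟩ := key y₀ le_rfl hy
  have hΔy1 : Δ y₀ = (fseg 1, Label.eq0) := by rw [hΔy]; congr 2; omega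
  obtain ⟨hlt, hend, hsgn⟩ := hseq.succ y₀ hy hylt
  have hmem : Δ (y₀+1) ∈ Sms n₀ y₀ := by rw [← hs]; exact hseq.mem (y₀+1) (by omega) (by omega)
  have hend' : (Δ (y₀+1)).1.2 = 0 := by
    rw [hend, hΔy1]; simp [fseg]
  have hfst : (Δ (y₀+1)).1 = zseg := by
    rcases mem_Sms_cases hmem with ⟨h, -⟩ | ⟨y, hy1, hy2, h⟩
    · exact h
    · rw [h] at hend'; simp [fseg] at hend'; omega
  have hpair : Δ (y₀+1) = (zseg, (Δ (y₀+1)).2) := by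
    rw [← Prod.mk.eta (p := Δ (y₀+1)), hfst]
  -- the label is le0 or eq0
  have hlab : (Δ (y₀+1)).2 = Label.le0 ∨ (Δ (y₀+1)).2 = Label.eq0 := by
    rcases hlt.1 with h | ⟨h, -⟩
    · rw [hΔy1] at h
      left
      cases hL : (Δ (y₀+1)).2 <;> rw [hL] at h <;>
        first | rfl | (exfalso; simp [Label.idx] at h)
    · rw [hΔy1] at h
      exact Or.inr h
  have hΔfin : Δ (y₀ + 1) = (zseg, if n₀ % 2 = 1 then Label.eq0 else Label.le0) := by
    rcases Nat.even_or_odd n₀ with hpar | hpar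
    · have hp : n₀ % 2 = 0 := by rcases hpar with ⟨k, hk⟩; omega
      rw [if_neg (by omega)]
      rcases hlab with h | h
      · rw [hpair, h]
      · exfalso
        rcases mem_Sms.mp hmem with ⟨h1 | h1, -⟩ | ⟨h1, h2⟩ | ⟨y, hy1, hy2, h1⟩
        · rw [h1] at h; simp at h
        · rw [h1] at h; simp at h
        · omega
        · rw [h1] at hfst; exact fseg_ne_zseg hy1 hfst
    · have hp : n₀ % 2 = 1 := Nat.odd_iff.mp hpar
      rw [if_pos hp]
      have hsucce : Succ ε (Δ y₀) ((zseg, Label.eq0) : LSeg) := by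
        rw [hΔy1]
        refine ⟨⟨Or.inr ⟨rfl, by simp [fseg, zseg]⟩, ?_⟩, by simp [fseg, zseg], ?_⟩
        · intro h; rw [Prod.mk.injEq] at h; exact fseg_ne_zseg le_rfl h.1.symm
        · intro _ _
          have := halt2 1 le_rfl hy
          rw [fseg_zero] at this
          simpa [fseg] using this
      have hle := hseq.succ_max y₀ hy hylt (zseg, Label.eq0)
        (by rw [hs]; exact mem_Sms.mpr (Or.inr (Or.inl ⟨rfl, hp⟩))) hsucce
      rcases hlab with h | h
      · exfalso
        rcases hle with h1 | ⟨h1, -⟩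
        · rw [h] at h1; simp [Label.idx] at h1
        · rw [h] at h1; simp at h1
      · rw [hpair, h]
  refine ⟨?_, fun j hj1 hjy => (key j hjy hj1).2, hΔfin⟩
  -- l = y₀ + 1
  rcases Nat.lt_or_ge (y₀ + 1) l with h | h
  · exfalso
    rcases Nat.even_or_odd n₀ with hpar | hpar
    · have hp : n₀ % 2 = 0 := by rcases hpar with ⟨k, hk⟩; omega
      obtain ⟨-, hend2, -⟩ := hseq.succ (y₀+1) (by omega) h
      have hmem2 : Δ (y₀+2) ∈ Sms n₀ y₀ := by
        rw [← hs]; exact hseq.mem (y₀+2) (by omega) (by omega)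
      have : (Δ (y₀+2)).1.2 = -2 := by
        rw [hend2, hΔfin]; simp
      rcases mem_Sms_cases hmem2 with ⟨-, h2⟩ | ⟨y, hy1, hy2, h2⟩
      · omega
      · rw [h2] at this; simp [fseg] at this; omega
    · have hp : n₀ % 2 = 1 := Nat.odd_iff.mp hpar
      refine hseq.not_special (y₀+1) (by omega) h ?_
      rw [hΔfin, if_pos hp]
      exact special_zseg ε (Or.inr rfl)
  · omega

section Helpers
variable {α : Type*}

lemma map_reflect (n : ℕ) (g : ℕ → α) :
    (Finset.Icc 1 n).val.map (fun j => g (n + 1 - j)) = (Finset.Icc 1 n).val.map g := by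
  have h2 : Set.InjOn (fun j => n + 1 - j) (Finset.Icc 1 n) := by
    intro a ha b hb h
    simp only [Finset.coe_Icc, Set.mem_Icc] at ha hb
    simp only at h
    omega
  have h1 : Finset.image (fun j => n + 1 - j) (Finset.Icc 1 n) = Finset.Icc 1 n := by
    ext k
    simp only [Finset.mem_image, Finset.mem_Icc]
    constructor
    · rintro ⟨a, ⟨ha1, ha2⟩, rfl⟩; omega
    · intro hk; exact ⟨n + 1 - k, by omega, by omega⟩
  calc (Finset.Icc 1 n).val.map (fun j => g (n + 1 - j))
      = ((Finset.Icc 1 n).val.map (fun j => n + 1 - j)).map g := by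
        rw [Multiset.map_map]; rfl
    _ = ((Finset.Icc 1 n).image (fun j => n + 1 - j)).val.map g := by
        rw [Finset.image_val_of_injOn h2]
    _ = (Finset.Icc 1 n).val.map g := by rw [h1]

lemma map_pred (n : ℕ) (hn : 1 ≤ n) (g : ℕ → α) :
    (Finset.Icc 1 n).val.map (fun y => g (y - 1)) = (Finset.Icc 0 (n - 1)).val.map g := by
  have h2 : Set.InjOn (fun j : ℕ => j - 1) (Finset.Icc 1 n) := by
    intro a ha b hb h
    simp only [Finset.coe_Icc, Set.mem_Icc] at ha hb
    simp only at h
    omega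
  have h1 : Finset.image (fun j : ℕ => j - 1) (Finset.Icc 1 n) = Finset.Icc 0 (n - 1) := by
    ext k
    simp only [Finset.mem_image, Finset.mem_Icc]
    constructor
    · rintro ⟨a, ⟨ha1, ha2⟩, rfl⟩; omega
    · intro hk; exact ⟨k + 1, by omega, by omega⟩
  calc (Finset.Icc 1 n).val.map (fun y => g (y - 1))
      = ((Finset.Icc 1 n).val.map (fun j => j - 1)).map g := by
        rw [Multiset.map_map]; rfl
    _ = ((Finset.Icc 1 n).image (fun j : ℕ => j - 1)).val.map g := by
        rw [Finset.image_val_of_injOn h2]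
    _ = (Finset.Icc 0 (n - 1)).val.map g := by rw [h1]

lemma Icc_zero_val (k : ℕ) : (Finset.Icc 0 k).val = 0 ::ₘ (Finset.Icc 1 k).val := by
  have h : Finset.Icc 0 k = insert 0 (Finset.Icc 1 k) := by
    ext a; simp only [Finset.mem_Icc, Finset.mem_insert]; omega
  rw [h, Finset.insert_val_of_notMem (by simp)]

lemma Icc_succ_val (n : ℕ) : (Finset.Icc 1 (n+1)).val = (n+1) ::ₘ (Finset.Icc 1 n).val := by
  have h : Finset.Icc 1 (n+1) = insert (n+1) (Finset.Icc 1 n) := by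
    ext a; simp only [Finset.mem_Icc, Finset.mem_insert]; omega
  rw [h, Finset.insert_val_of_notMem (by simp)]

end Helpers

lemma dual_fseg (y : ℕ) : LSeg.dual (fseg y, Label.eq0) = (fseg y, Label.eq0) := by
  simp [LSeg.dual, Seg.dual, fseg]

lemma dual_zseg_eq0 : LSeg.dual (zseg, Label.eq0) = (zseg, Label.eq0) := by
  simp [LSeg.dual, Seg.dual, zseg]

lemma dual_zseg_le0 : LSeg.dual (zseg, Label.le0) = (zseg, Label.ge0) := by
  simp [LSeg.dual, Seg.dual, zseg]

lemma dual_zseg_ge0 : LSeg.dual (zseg, Label.ge0) = (zseg, Label.ge0) := by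
  simp [LSeg.dual, Seg.dual, zseg]

lemma nCentered_Mms (n₀ y₀ : ℕ) : nCentered (Mms n₀ y₀) = n₀ + y₀ := by
  unfold nCentered
  rw [Multiset.filter_eq_self.mpr]
  · rw [Multiset.card_add, Multiset.card_replicate, Multiset.card_map]
    have : (Finset.Icc 1 y₀).val.card = (Finset.Icc 1 y₀).card := rfl
    rw [this, Nat.card_Icc]; omega
  · intro a ha
    simp only [Multiset.mem_add, Multiset.mem_replicate, Multiset.mem_map, Finset.mem_val] at ha
    rcases ha with ⟨-, rfl⟩ | ⟨y, -, rfl⟩ <;> simp [zseg, fseg]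

lemma eps_alt {y₀ : ℕ} {ε : Seg → ℤ}
    (halt2 : ∀ y : ℕ, 1 ≤ y → y ≤ y₀ → ε (fseg (y - 1)) = - ε (fseg y)) :
    ∀ y, y ≤ y₀ → ε (fseg y) = (-1) ^ y * ε (fseg 0) := by
  intro y
  induction y with
  | zero => intro _; simp
  | succ k ih =>
    intro h
    have h2 := halt2 (k+1) (by omega) h
    rw [Nat.add_sub_cancel, ih (by omega)] at h2
    have h3 : ε (fseg (k+1)) = - ((-1) ^ k * ε (fseg 0)) := by omega
    rw [h3, pow_succ]; ring

lemma eps0_pm (ε : Seg → ℤ) (Δ : ℕ → LSeg) (l : ℕ) : eps0 ε Δ l = 1 ∨ eps0 ε Δ l = -1 := by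
  unfold eps0; split
  · exact Or.inr rfl
  · exact Or.inl rfl

lemma epsHash_sign {m : Multiset Seg} {ε : Seg → ℤ} {Δ : ℕ → LSeg} {l : ℕ}
    (hsign : ∀ Δ0 : Seg, ε Δ0 = 1 ∨ ε Δ0 = -1) :
    ∀ Δ0 : Seg, epsHash m ε Δ l Δ0 = 1 ∨ epsHash m ε Δ l Δ0 = -1 := by
  intro Δ0
  unfold epsHash
  rcases eps0_pm ε Δ l with h | h <;>
  rcases hsign (Δ0.1 - 2, Δ0.2 + 2) with h2 | h2 <;>
  rcases hsign Δ0 with h3 | h3 <;>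
  rw [h] <;> split_ifs <;> simp [h2, h3]

lemma isAD_zero_inv {ε : Seg → ℤ} {d : Multiset (Seg × ℤ)} (h : IsAD 0 ε d) : d = 0 := by
  cases h with
  | zero => rfl
  | step hm hseq hrec => exact absurd rfl hm

lemma isAD_ne_inv {m : Multiset Seg} {ε : Seg → ℤ} {d : Multiset (Seg × ℤ)}
    (h : IsAD m ε d) (hm : m ≠ 0) :
    ∃ (Δ : ℕ → LSeg) (l : ℕ) (d' : Multiset (Seg × ℤ)),
      IsInitSeq m ε Δ l ∧ IsAD (mHash m Δ l) (epsHash m ε Δ l) d' ∧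
        d = mOne m ε Δ l + d' := by
  cases h with
  | zero => exact absurd rfl hm
  | step hm' hseq hrec => exact ⟨_, _, _, hseq, hrec, rfl⟩

lemma Mms_ne_zero {n₀ y₀ : ℕ} (hn : 1 ≤ n₀) : Mms n₀ y₀ ≠ 0 := by
  intro h
  have h2 := count_zseg_M n₀ y₀
  rw [h] at h2
  simp at h2
  omega

/-- abbreviation for the labeled part coming from the non-trivial segments -/
abbrev Pms (y₀ : ℕ) : Multiset LSeg := (Finset.Icc 1 y₀).val.map (fun y => (fseg y, Label.eq0))

lemma map_dual_P (y₀ : ℕ) : (Pms y₀).map LSeg.dual = Pms y₀ := by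
  rw [Multiset.map_map]
  exact Multiset.map_congr rfl (fun y _ => dual_fseg y)

lemma DEnd_eq {y₀ : ℕ} {Δ : ℕ → LSeg}
    (hΔ : ∀ j, 1 ≤ j → j ≤ y₀ → Δ j = (fseg (y₀ + 1 - j), Label.eq0)) :
    DEnd Δ (y₀ + 1) = Δ (y₀ + 1) ::ₘ Pms y₀ := by
  rw [DEnd, Icc_succ_val, Multiset.map_cons]
  congr 1
  rw [Multiset.map_congr rfl (fun j hj => by
    simp only [Finset.mem_val, Finset.mem_Icc] at hj
    exact hΔ j hj.1 hj.2)]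
  exact map_reflect y₀ (fun y => (fseg y, Label.eq0))

lemma trim_P (y₀ : ℕ) (hy : 1 ≤ y₀) :
    Multiset.filter (fun Δ0 : Seg => Δ0.1 ≤ Δ0.2)
      ((Pms y₀).map (fun Λ => ((Λ.1.1 + 2, Λ.1.2 - 2) : Seg))) =
    zseg ::ₘ (Finset.Icc 1 (y₀ - 1)).val.map fseg := by
  rw [Multiset.map_map]
  have h1 : (Finset.Icc 1 y₀).val.map
      ((fun Λ : LSeg => ((Λ.1.1 + 2, Λ.1.2 - 2) : Seg)) ∘ (fun y => (fseg y, Label.eq0))) =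
      (Finset.Icc 1 y₀).val.map (fun y => fseg (y - 1)) := by
    apply Multiset.map_congr rfl
    intro y hy'
    simp only [Finset.mem_val, Finset.mem_Icc] at hy'
    simp only [Function.comp_apply, fseg, Prod.mk.injEq]
    omega
  rw [h1, map_pred y₀ hy, Icc_zero_val, Multiset.map_cons, fseg_zero]
  rw [Multiset.filter_eq_self.mpr]
  intro a ha
  simp only [Multiset.mem_cons, Multiset.mem_map, Finset.mem_val, Finset.mem_Icc] at ha
  rcases ha with rfl | ⟨y, -, rfl⟩ <;> simp [zseg, fseg]

lemma msub_self {α : Type*} [DecidableEq α] (s : Multiset α) : s - s = 0 := by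
  ext a; simp [Multiset.count_sub]

lemma minter_self {α : Type*} [DecidableEq α] (s : Multiset α) : s ∩ s = s := by
  ext a; rw [Multiset.count_inter]; omega

lemma cons_inter_cons_ne {α : Type*} [DecidableEq α] {x y : α} (h : x ≠ y) (s : Multiset α) :
    (x ::ₘ s) ∩ (y ::ₘ s) = s := by
  ext a
  rw [Multiset.count_inter, Multiset.count_cons, Multiset.count_cons]
  rcases eq_or_ne a x with rfl | hx
  · rw [if_pos rfl, if_neg h]; omega
  · rw [if_neg hx]; split_ifs <;> omega

lemma cons_sub_self {α : Type*} [DecidableEq α] (x : α) (s : Multiset α) :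
    (x ::ₘ s) - s = {x} := by
  ext a
  rw [Multiset.count_sub, Multiset.count_cons, Multiset.count_singleton]
  split_ifs <;> omega

set_option maxHeartbeats 1000000 in
lemma mHash_odd {n₀ y₀ : ℕ} {Δ : ℕ → LSeg} (hp : n₀ % 2 = 1) (hy : 1 ≤ y₀)
    (hΔ : ∀ j, 1 ≤ j → j ≤ y₀ → Δ j = (fseg (y₀ + 1 - j), Label.eq0))
    (hlast : Δ (y₀ + 1) = (zseg, Label.eq0)) :
    mHash (Mms n₀ y₀) Δ (y₀ + 1) = Mms n₀ (y₀ - 1) := by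
  have hn : 1 ≤ n₀ := by omega
  have hDEnd : DEnd Δ (y₀ + 1) = (zseg, Label.eq0) ::ₘ Pms y₀ := by
    rw [DEnd_eq hΔ, hlast]
  have hDBeg : DBeg Δ (y₀ + 1) = DEnd Δ (y₀ + 1) := by
    rw [DBeg, hDEnd, Multiset.map_cons, dual_zseg_eq0, map_dual_P]
  have hDBoth : DBoth Δ (y₀ + 1) = DEnd Δ (y₀ + 1) := by
    rw [DBoth, hDBeg, minter_self]
  have hsub : Sms n₀ y₀ - ((zseg, Label.eq0) ::ₘ Pms y₀) =
      Multiset.replicate (n₀ / 2) (zseg, Label.le0) +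
        Multiset.replicate (n₀ / 2) (zseg, Label.ge0) := by
    ext a
    simp only [Sms, Multiset.count_sub, Multiset.count_add, Multiset.count_replicate,
      Multiset.count_cons]
    split_ifs <;> first | omega | (simp only [Pms] at *; omega) | (subst_vars; simp at *)
  rw [mHash, hDBeg, hDBoth, msub_self, Multiset.sub_zero, Multiset.map_zero,
    Multiset.map_zero, add_zero, add_zero, hDEnd, smap_Mms n₀ y₀ hn, hsub,
    Multiset.map_cons, Multiset.filter_cons]
  have hneg : ¬ ((zseg, Label.eq0) : LSeg).1.1 + 2 ≤ ((zseg, Label.eq0) : LSeg).1.2 - 2 := by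
    simp [zseg]
  rw [if_neg hneg, zero_add, trim_P y₀ hy]
  rw [Multiset.map_add, Multiset.map_replicate, Multiset.map_replicate]
  ext a
  simp only [Multiset.count_add, Multiset.count_replicate, Multiset.count_cons]
  split_ifs <;> first | omega | (subst_vars; simp_all; try omega)

set_option maxHeartbeats 1000000 in
lemma mHash_even {n₀ y₀ : ℕ} {Δ : ℕ → LSeg} (hp : n₀ % 2 = 0) (hn : 1 ≤ n₀) (hy : 1 ≤ y₀)
    (hΔ : ∀ j, 1 ≤ j → j ≤ y₀ → Δ j = (fseg (y₀ + 1 - j), Label.eq0))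
    (hlast : Δ (y₀ + 1) = (zseg, Label.le0)) :
    mHash (Mms n₀ y₀) Δ (y₀ + 1) = Mms (n₀ - 1) (y₀ - 1) := by
  have hzP : ∀ L : Label, ((zseg, L) : LSeg) ∉ Pms y₀ := by
    intro L h
    simp only [Pms, Multiset.mem_map, Finset.mem_val, Finset.mem_Icc] at h
    obtain ⟨y, ⟨hy1, -⟩, h⟩ := h
    rw [Prod.mk.injEq] at h
    exact fseg_ne_zseg hy1 h.1
  have hDEnd : DEnd Δ (y₀ + 1) = (zseg, Label.le0) ::ₘ Pms y₀ := by
    rw [DEnd_eq hΔ, hlast]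
  have hDBeg : DBeg Δ (y₀ + 1) = (zseg, Label.ge0) ::ₘ Pms y₀ := by
    rw [DBeg, hDEnd, Multiset.map_cons, dual_zseg_le0, map_dual_P]
  have hDBoth : DBoth Δ (y₀ + 1) = Pms y₀ := by
    rw [DBoth, hDEnd, hDBeg]
    exact cons_inter_cons_ne (by simp) _
  have hEsub : DEnd Δ (y₀ + 1) - DBoth Δ (y₀ + 1) = {((zseg, Label.le0) : LSeg)} := by
    rw [hDEnd, hDBoth]; exact cons_sub_self _ _
  have hBsub : DBeg Δ (y₀ + 1) - DBoth Δ (y₀ + 1) = {((zseg, Label.ge0) : LSeg)} := by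
    rw [hDBeg, hDBoth]; exact cons_sub_self _ _
  have hsub : Sms n₀ y₀ - DEnd Δ (y₀ + 1) - (DBeg Δ (y₀ + 1) - DBoth Δ (y₀ + 1)) =
      Multiset.replicate (n₀ / 2 - 1) (zseg, Label.le0) +
        Multiset.replicate (n₀ / 2 - 1) (zseg, Label.ge0) := by
    rw [hDEnd, hBsub]
    ext a
    simp only [Sms, Multiset.count_sub, Multiset.count_add, Multiset.count_replicate,
      Multiset.count_cons, Multiset.count_singleton]
    split_ifs <;> first | omega | (simp only [Pms] at *; omega) | (subst_vars; simp at *)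
  rw [mHash, smap_Mms n₀ y₀ hn, hsub, hEsub, hBsub, hDBoth,
    Multiset.map_singleton, Multiset.map_singleton]
  have e1 : ((((zseg, Label.le0) : LSeg)).1.1, (((zseg, Label.le0) : LSeg)).1.2 - 2) =
      (((0:ℤ), (-2:ℤ)) : Seg) := rfl
  have e2 : ((((zseg, Label.ge0) : LSeg)).1.1 + 2, (((zseg, Label.ge0) : LSeg)).1.2) =
      (((2:ℤ), (0:ℤ)) : Seg) := rfl
  rw [e1, e2, Multiset.filter_add, Multiset.filter_add, trim_P y₀ hy,
    Multiset.filter_singleton, Multiset.filter_singleton,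
    if_neg (by norm_num), if_neg (by norm_num),
    Multiset.map_add, Multiset.map_replicate, Multiset.map_replicate]
  ext a
  simp only [Multiset.count_add, Multiset.count_replicate, Multiset.count_cons,
    Multiset.empty_eq_zero, Multiset.count_zero]
  split_ifs <;> first | omega | (subst_vars; simp_all; try omega) | (subst_vars; simp_all; omega)

lemma epsHash_at {n₀ y₀ : ℕ} {ε : Seg → ℤ} {Δ : ℕ → LSeg} (hy : 1 ≤ y₀)
    (hΔ : ∀ j, 1 ≤ j → j ≤ y₀ → Δ j = (fseg (y₀ + 1 - j), Label.eq0))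
    {y : ℕ} (hyy : y ≤ y₀ - 1) :
    epsHash (Mms n₀ y₀) ε Δ (y₀ + 1) (fseg y) = eps0 ε Δ (y₀ + 1) * ε (fseg (y + 1)) := by
  have hidx : y₀ + 1 - (y₀ - y) = y + 1 := by omega
  have hj : Δ (y₀ - y) = (fseg (y + 1), Label.eq0) := by
    rw [hΔ (y₀ - y) (by omega) (by omega), hidx]
  have hmemDBeg : Δ (y₀ - y) ∈ DBeg Δ (y₀ + 1) := by
    rw [DBeg]
    refine Multiset.mem_map.mpr ⟨Δ (y₀ - y), ?_, ?_⟩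
    · rw [DEnd]
      exact Multiset.mem_map.mpr ⟨y₀ - y, by simp only [Finset.mem_val, Finset.mem_Icc]; omega, rfl⟩
    · rw [hj]; exact dual_fseg _
  have htrim : trimAt Δ (y₀ + 1) (y₀ - y) = fseg y := by
    rw [trimAt, if_pos hmemDBeg, hj]
    simp only [fseg, Prod.mk.injEq]
    constructor <;> push_cast <;> ring
  have harg : (((fseg y).1 - 2, (fseg y).2 + 2) : Seg) = fseg (y + 1) := by
    simp only [fseg, Prod.mk.injEq]
    constructor <;> push_cast <;> ring
  unfold epsHash
  rw [if_pos ⟨y₀ - y, by simp only [Finset.mem_Icc]; omega,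
    by rw [hj]; simp [fseg], htrim⟩, harg]

lemma epsHash_notrim {m : Multiset Seg} {ε : Seg → ℤ} {Δ : ℕ → LSeg}
    (hend : (Δ 1).1.2 = 0) (Δ0 : Seg) (h0 : Δ0.2 = 0) :
    epsHash m ε Δ 1 Δ0 = eps0 ε Δ 1 * ε Δ0 := by
  have hfalse : ∀ j : ℕ, j ∈ Finset.Icc 1 1 → trimAt Δ 1 j ≠ Δ0 := by
    intro j hj heq
    simp only [Finset.mem_Icc] at hj
    have hj1 : j = 1 := by omega
    subst hj1
    rw [trimAt] at heq
    split_ifs at heq <;> (rw [← heq] at h0; simp at h0; omega)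
  unfold epsHash
  rw [if_neg, if_neg, if_neg]
  · rintro ⟨j, hj, -, htr, -⟩; exact hfalse j hj htr
  · rintro ⟨j, hj, -, htr, -⟩; exact hfalse j hj htr
  · rintro ⟨j, hj, -, htr⟩; exact hfalse j hj htr

lemma not_special_zle (ε : Seg → ℤ) : ¬ Special ε (zseg, Label.le0) := by
  rintro (⟨-, h | h⟩ | h | ⟨h, -, -⟩) <;> exact absurd h (by decide)

lemma Icc10_val : (Finset.Icc 1 0).val = 0 := by
  rw [Finset.Icc_eq_empty (by omega)]; rfl

lemma Mms_zero_zero : Mms 0 0 = 0 := by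
  simp [Icc10_val]

set_option maxHeartbeats 1000000 in
lemma mHash_zero {n₀ : ℕ} (hn : 1 ≤ n₀) {Δ : ℕ → LSeg}
    (hΔ1 : Δ 1 = (zseg, if n₀ = 1 then Label.eq0 else Label.ge0)) :
    mHash (Mms n₀ 0) Δ 1 = Mms (n₀ - 1) 0 := by
  have hDEnd : DEnd Δ 1 = {Δ 1} := by
    rw [DEnd, Finset.Icc_self, Finset.singleton_val, Multiset.map_singleton]
  have hdual : LSeg.dual (Δ 1) = Δ 1 := by
    rw [hΔ1]
    split_ifs
    · exact dual_zseg_eq0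
    · exact dual_zseg_ge0
  have hDBeg : DBeg Δ 1 = {Δ 1} := by rw [DBeg, hDEnd, Multiset.map_singleton, hdual]
  have hDBoth : DBoth Δ 1 = {Δ 1} := by rw [DBoth, hDEnd, hDBeg, minter_self]
  rw [mHash, hDEnd, hDBeg, hDBoth, msub_self, Multiset.sub_zero, Multiset.map_zero,
    Multiset.map_zero, add_zero, add_zero, Multiset.map_singleton, smap_Mms n₀ 0 hn]
  have h2 : Multiset.filter (fun Δ0 : Seg => Δ0.1 ≤ Δ0.2)
      ({(((Δ 1).1.1 + 2, (Δ 1).1.2 - 2) : Seg)} : Multiset Seg) = 0 := by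
    rw [Multiset.filter_singleton, if_neg]
    · rfl
    · rw [hΔ1]; simp [zseg]
  rw [h2, add_zero]
  rcases eq_or_ne n₀ 1 with h1 | h1
  · subst h1
    rw [hΔ1, if_pos rfl]
    have h3 : Sms 1 0 - {((zseg, Label.eq0) : LSeg)} = 0 := by
      ext a
      simp only [Sms, Icc10_val, Multiset.map_zero, add_zero, Multiset.count_sub,
        Multiset.count_add, Multiset.count_replicate, Multiset.count_singleton,
        Multiset.count_zero]
      split_ifs <;> first | omega | (subst_vars; simp_all; try omega)
    rw [h3, Multiset.map_zero, Mms_zero_zero]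
  · rw [hΔ1, if_neg h1]
    have h3 : Sms n₀ 0 - {((zseg, Label.ge0) : LSeg)} =
        Multiset.replicate (n₀ / 2) (zseg, Label.le0) +
          Multiset.replicate (n₀ / 2 - 1) (zseg, Label.ge0) +
          Multiset.replicate (n₀ % 2) (zseg, Label.eq0) := by
      ext a
      simp only [Sms, Icc10_val, Multiset.map_zero, add_zero, Multiset.count_sub,
        Multiset.count_add, Multiset.count_replicate, Multiset.count_singleton,
        Multiset.count_zero]
      split_ifs <;> first | omega | (subst_vars; simp_all; try omega)
    rw [h3, Multiset.map_add, Multiset.map_add, Multiset.map_replicate,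
      Multiset.map_replicate, Multiset.map_replicate]
    ext a
    simp only [Mms, Icc10_val, Multiset.map_zero, add_zero, Multiset.count_add,
      Multiset.count_replicate]
    split_ifs <;> omega

/-- the expected value of the algorithm -/
def ADval (n₀ y₀ : ℕ) (ε : Seg → ℤ) : Multiset (Seg × ℤ) :=
  if y₀ = 0 then Multiset.replicate n₀ (zseg, (-1) ^ (n₀ + 1) * ε zseg)
  else if n₀ % 2 = 1 then
    Multiset.replicate n₀ (zseg, ε zseg) +
      (Finset.Icc 1 y₀).val.map (fun y => (fseg y, ε (fseg y)))
  else
    Multiset.replicate (n₀ - 1) (zseg, -ε zseg) +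
      (Finset.Icc 1 (y₀ - 1)).val.map (fun y => (fseg y, -ε (fseg y))) +
      {((-(2 * (y₀ : ℤ)), (0 : ℤ)), 1), (((0 : ℤ), 2 * (y₀ : ℤ)), 1)}

set_option maxHeartbeats 2000000 in
lemma master : ∀ N n₀ y₀ (ε : Seg → ℤ) (d : Multiset (Seg × ℤ)), n₀ + y₀ ≤ N → 1 ≤ n₀ →
    (∀ Δ0 : Seg, ε Δ0 = 1 ∨ ε Δ0 = -1) →
    (∀ y : ℕ, 1 ≤ y → y ≤ y₀ → ε (fseg (y - 1)) = - ε (fseg y)) →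
    IsAD (Mms n₀ y₀) ε d → d = ADval n₀ y₀ ε := by
  intro N
  induction N with
  | zero => intro n₀ y₀ ε d hN hn _ _ _; omega
  | succ N ihN =>
    intro n₀ y₀ ε d hN hn hsign halt2 had
    obtain ⟨Δ, l, d', hseq, hrec, rfl⟩ := isAD_ne_inv had (Mms_ne_zero hn)
    rcases Nat.eq_zero_or_pos y₀ with rfl | hy
    · -- case y₀ = 0
      obtain ⟨hl, hΔ1⟩ := seq_det0 hn hseq
      subst hl
      have hspec : Special ε (Δ 1) := by
        rw [hΔ1]; exact special_zseg ε (by split_ifs <;> simp)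
      have heps0 : eps0 ε Δ 1 = -1 := if_pos hspec
      have hend : (Δ 1).1.2 = 0 := by rw [hΔ1]
      have hzpair : ((-(Δ 1).1.2, (Δ 1).1.2) : Seg) = zseg := by rw [hend]; norm_num [zseg]
      have hone : epsOne (Mms n₀ 0) ε Δ = (-1) ^ (n₀ + 1) * ε zseg := by
        rw [epsOne, if_pos (by rw [hend]; decide), nCentered_Mms, Nat.add_zero]
      have hM1 : mOne (Mms n₀ 0) ε Δ 1 = {(zseg, (-1) ^ (n₀ + 1) * ε zseg)} := by
        rw [mOne, if_pos hspec, hzpair, hone]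
      rw [mHash_zero hn hΔ1] at hrec
      rw [ADval, if_pos rfl, hM1]
      rcases eq_or_ne n₀ 1 with h1 | h1
      · subst h1
        rw [Mms_zero_zero] at hrec
        rw [isAD_zero_inv hrec, add_zero]
        rfl
      · have hvz : epsHash (Mms n₀ 0) ε Δ 1 zseg = - ε zseg := by
          rw [epsHash_notrim hend zseg rfl, heps0]; ring
        have hb1 : n₀ - 1 + 0 ≤ N := by omega
        have hb2 : 1 ≤ n₀ - 1 := by omega
        have hd' := ihN (n₀ - 1) 0 _ d' hb1 hb2 (epsHash_sign hsign)
          (fun y hy1 hy2 => absurd (hy1.trans hy2) (by omega)) hrec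
        rw [hd', ADval, if_pos rfl, hvz]
        have hpow : (-1 : ℤ) ^ (n₀ - 1 + 1) * -ε zseg = (-1) ^ (n₀ + 1) * ε zseg := by
          have h2 : n₀ + 1 = (n₀ - 1 + 1) + 1 := by omega
          rw [h2, pow_succ]; ring
        rw [hpow]
        ext a
        simp only [Multiset.count_add, Multiset.count_replicate, Multiset.count_singleton]
        split_ifs <;> first | omega | (subst_vars; simp_all; try omega)
    · -- case y₀ ≥ 1
      obtain ⟨hl, hkey, hlast⟩ := seq_det hn hy halt2 hseq
      subst hl
      have hΔ1 : Δ 1 = (fseg y₀, Label.eq0) := hkey 1 le_rfl hy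
      have hend1 : (Δ 1).1.2 = 2 * (y₀ : ℤ) := by rw [hΔ1]
      have hIcc : (Finset.Icc 1 y₀).val = y₀ ::ₘ (Finset.Icc 1 (y₀ - 1)).val := by
        have h := Icc_succ_val (y₀ - 1)
        rw [show y₀ - 1 + 1 = y₀ from by omega] at h
        exact h
      rcases eq_or_ne (n₀ % 2) 1 with hpar | hpar
      · -- n₀ odd
        have hlast' : Δ (y₀ + 1) = (zseg, Label.eq0) := by rw [hlast, if_pos hpar]
        have hspec : Special ε (Δ (y₀ + 1)) := by
          rw [hlast']; exact special_zseg ε (Or.inr rfl)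
        have heps0 : eps0 ε Δ (y₀ + 1) = -1 := if_pos hspec
        have halty : ε (fseg y₀) = (-1) ^ y₀ * ε zseg := by
          have h := eps_alt halt2 y₀ le_rfl
          rw [fseg_zero] at h
          exact h
        have hM1 : mOne (Mms n₀ y₀) ε Δ (y₀ + 1) = {(fseg y₀, ε (fseg y₀))} := by
          rw [mOne, if_pos hspec]
          have e1 : ((-(Δ 1).1.2, (Δ 1).1.2) : Seg) = fseg y₀ := by rw [hend1]
          have e2 : epsOne (Mms n₀ y₀) ε Δ = ε (fseg y₀) := by
            rw [epsOne, if_pos (by rw [hend1]; omega), nCentered_Mms, halty]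
            have hpow : (-1 : ℤ) ^ (n₀ + y₀ + 1) = (-1) ^ y₀ := by
              rw [show n₀ + y₀ + 1 = y₀ + (n₀ + 1) from by omega, pow_add,
                Even.neg_one_pow (n := n₀ + 1) (Nat.even_iff.mpr (by omega)), mul_one]
            rw [hpow]
          rw [e1, e2]
        rw [mHash_odd hpar hy hkey hlast'] at hrec
        have hAt : ∀ y : ℕ, y ≤ y₀ - 1 →
            epsHash (Mms n₀ y₀) ε Δ (y₀ + 1) (fseg y) = - ε (fseg (y + 1)) := by
          intro y h
          rw [epsHash_at hy hkey h, heps0]; ring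
        have halt2h : ∀ y : ℕ, 1 ≤ y → y ≤ y₀ - 1 →
            epsHash (Mms n₀ y₀) ε Δ (y₀ + 1) (fseg (y - 1)) =
              - epsHash (Mms n₀ y₀) ε Δ (y₀ + 1) (fseg y) := by
          intro y h1 h2
          rw [hAt (y - 1) (by omega), hAt y h2, show y - 1 + 1 = y from by omega]
          have h3 := halt2 (y + 1) (by omega) (by omega)
          rw [Nat.add_sub_cancel] at h3
          omega
        have hd' := ihN n₀ (y₀ - 1) _ d' (by omega) hn (epsHash_sign hsign) halt2h hrec
        have hAt0 : epsHash (Mms n₀ y₀) ε Δ (y₀ + 1) zseg = ε zseg := by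
          have h := hAt 0 (by omega)
          rw [show (0:ℕ) + 1 = 1 from rfl, fseg_zero] at h
          have h3 := halt2 1 le_rfl hy
          rw [show (1 : ℕ) - 1 = 0 from rfl, fseg_zero] at h3
          omega
        have hAty : ∀ y : ℕ, 1 ≤ y → y ≤ y₀ - 1 →
            epsHash (Mms n₀ y₀) ε Δ (y₀ + 1) (fseg y) = ε (fseg y) := by
          intro y h1 h2
          have h3 := halt2 (y + 1) (by omega) (by omega)
          rw [Nat.add_sub_cancel] at h3
          have h4 := hAt y h2
          omega
        have hval : ADval n₀ (y₀ - 1) (epsHash (Mms n₀ y₀) ε Δ (y₀ + 1)) =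
            Multiset.replicate n₀ (zseg, ε zseg) +
              (Finset.Icc 1 (y₀ - 1)).val.map (fun y => (fseg y, ε (fseg y))) := by
          rcases eq_or_ne y₀ 1 with hy1 | hy1
          · subst hy1
            rw [ADval, if_pos rfl, hAt0, Icc10_val, Multiset.map_zero, add_zero,
              Even.neg_one_pow (n := n₀ + 1) (Nat.even_iff.mpr (by omega)), one_mul]
          · rw [ADval, if_neg (by omega), if_pos hpar, hAt0]
            congr 1
            apply Multiset.map_congr rfl
            intro y hy2
            simp only [Finset.mem_val, Finset.mem_Icc] at hy2
            rw [hAty y hy2.1 hy2.2]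
        rw [hM1, hd', hval, ADval, if_neg (by omega), if_pos hpar, hIcc,
          Multiset.map_cons]
        ext a
        simp only [Multiset.count_add, Multiset.count_cons, Multiset.count_singleton]
        split_ifs <;> first | omega | (subst_vars; simp_all; try omega)
      · -- n₀ even
        have hp0 : n₀ % 2 = 0 := by omega
        have hn2 : 2 ≤ n₀ := by omega
        have hlast' : Δ (y₀ + 1) = (zseg, Label.le0) := by rw [hlast, if_neg hpar]
        have hnspec : ¬ Special ε (Δ (y₀ + 1)) := by
          rw [hlast']; exact not_special_zle ε
        have heps0 : eps0 ε Δ (y₀ + 1) = 1 := if_neg hnspec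
        have hendl : (Δ (y₀ + 1)).1.2 = 0 := by rw [hlast']
        have hM1 : mOne (Mms n₀ y₀) ε Δ (y₀ + 1) =
            {((-(2 * (y₀ : ℤ)), (0 : ℤ)), 1), (((0 : ℤ), 2 * (y₀ : ℤ)), 1)} := by
          rw [mOne, if_neg hnspec, hendl, hend1]
          norm_num
          exact Multiset.cons_swap _ _ _
        rw [mHash_even hp0 hn hy hkey hlast'] at hrec
        have hAt : ∀ y : ℕ, y ≤ y₀ - 1 →
            epsHash (Mms n₀ y₀) ε Δ (y₀ + 1) (fseg y) = ε (fseg (y + 1)) := by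
          intro y h
          rw [epsHash_at hy hkey h, heps0, one_mul]
        have halt2h : ∀ y : ℕ, 1 ≤ y → y ≤ y₀ - 1 →
            epsHash (Mms n₀ y₀) ε Δ (y₀ + 1) (fseg (y - 1)) =
              - epsHash (Mms n₀ y₀) ε Δ (y₀ + 1) (fseg y) := by
          intro y h1 h2
          rw [hAt (y - 1) (by omega), hAt y h2, show y - 1 + 1 = y from by omega]
          have h3 := halt2 (y + 1) (by omega) (by omega)
          rw [Nat.add_sub_cancel] at h3
          omega
        have hd' := ihN (n₀ - 1) (y₀ - 1) _ d' (by omega) (by omega)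
          (epsHash_sign hsign) halt2h hrec
        have hAt0 : epsHash (Mms n₀ y₀) ε Δ (y₀ + 1) zseg = - ε zseg := by
          have h := hAt 0 (by omega)
          rw [show (0:ℕ) + 1 = 1 from rfl, fseg_zero] at h
          have h3 := halt2 1 le_rfl hy
          rw [show (1 : ℕ) - 1 = 0 from rfl, fseg_zero] at h3
          omega
        have hAty : ∀ y : ℕ, 1 ≤ y → y ≤ y₀ - 1 →
            epsHash (Mms n₀ y₀) ε Δ (y₀ + 1) (fseg y) = - ε (fseg y) := by
          intro y h1 h2
          have h3 := halt2 (y + 1) (by omega) (by omega)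
          rw [Nat.add_sub_cancel] at h3
          have h4 := hAt y h2
          omega
        have hval : ADval (n₀ - 1) (y₀ - 1) (epsHash (Mms n₀ y₀) ε Δ (y₀ + 1)) =
            Multiset.replicate (n₀ - 1) (zseg, - ε zseg) +
              (Finset.Icc 1 (y₀ - 1)).val.map (fun y => (fseg y, - ε (fseg y))) := by
          rcases eq_or_ne y₀ 1 with hy1 | hy1
          · subst hy1
            rw [ADval, if_pos rfl, hAt0, Icc10_val, Multiset.map_zero, add_zero,
              Even.neg_one_pow (n := n₀ - 1 + 1) (Nat.even_iff.mpr (by omega)), one_mul]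
          · rw [ADval, if_neg (by omega), if_pos (by omega), hAt0]
            congr 1
            apply Multiset.map_congr rfl
            intro y hy2
            simp only [Finset.mem_val, Finset.mem_Icc] at hy2
            rw [hAty y hy2.1 hy2.2]
        rw [hM1, hd', hval, ADval, if_neg (by omega), if_neg hpar]
        ext a
        simp only [Multiset.count_add, Multiset.count_cons, Multiset.count_singleton,
          Multiset.insert_eq_cons]
        split_ifs <;> first | omega | (subst_vars; simp_all; try omega)


lemma bind_pure_cast (s : Multiset ℕ) :
    (do let a ← s; pure ((a : ℤ)) : Multiset ℤ) = s.map (fun a : ℕ => (a : ℤ)) := by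
  show Multiset.bind s (fun a => {(a : ℤ)}) = _
  exact Multiset.bind_singleton _ _

/-- Lemma 10.1.1: explicit computation of `AD` on
`𝔪 = n₀·[0,0] + Σ_{y=1}^{y₀} [−y,y]` (integer case) with alternating signs. -/
theorem stmt15 (n₀ y₀ : ℕ) (hn₀ : 1 ≤ n₀) (ε : Seg → ℤ)
    (hsign : ∀ Δ0 : Seg, ε Δ0 = 1 ∨ ε Δ0 = -1)
    (halt : ∀ y : ℕ, 1 ≤ y → y ≤ y₀ →
      ε (-(2 * (y : ℤ)), 2 * (y : ℤ)) *
        ε (-(2 * ((y : ℤ) - 1)), 2 * ((y : ℤ) - 1)) = -1)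
    (d : Multiset (Seg × ℤ))
    (had : IsAD
      (Multiset.replicate n₀ (((0 : ℤ), (0 : ℤ)) : Seg) +
        (Finset.Icc 1 y₀).val.map (fun y => ((-(2 * (y : ℤ)), 2 * (y : ℤ)) : Seg)))
      ε d) :
    (y₀ = 0 →
      d = Multiset.replicate n₀
        ((((0 : ℤ), (0 : ℤ)) : Seg), (-1) ^ (n₀ + 1) * ε (0, 0))) ∧
    (Odd n₀ → y₀ ≠ 0 →
      d = Multiset.replicate n₀ ((((0 : ℤ), (0 : ℤ)) : Seg), ε (0, 0)) +
        (Finset.Icc 1 y₀).val.map (fun y =>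
          (((-(2 * (y : ℤ)), 2 * (y : ℤ)) : Seg),
            ε (-(2 * (y : ℤ)), 2 * (y : ℤ))))) ∧
    (Even n₀ → y₀ ≠ 0 →
      d = Multiset.replicate (n₀ - 1) ((((0 : ℤ), (0 : ℤ)) : Seg), -ε (0, 0)) +
        (Finset.Icc 1 (y₀ - 1)).val.map (fun y =>
          (((-(2 * (y : ℤ)), 2 * (y : ℤ)) : Seg),
            -ε (-(2 * (y : ℤ)), 2 * (y : ℤ)))) +
        {(((-(2 * (y₀ : ℤ)), (0 : ℤ)) : Seg), 1),
          ((((0 : ℤ), 2 * (y₀ : ℤ)) : Seg), 1)}) := by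
  rw [bind_pure_cast, Multiset.map_map] at had
  have hm : IsAD (Mms n₀ y₀) ε d := had
  have halt2 : ∀ y : ℕ, 1 ≤ y → y ≤ y₀ → ε (fseg (y - 1)) = - ε (fseg y) := by
    intro y h1 h2
    have h3 := halt y h1 h2
    have e : ((-(2 * ((y:ℤ) - 1)), 2 * ((y:ℤ) - 1)) : Seg) = fseg (y - 1) := by
      simp only [fseg, Prod.mk.injEq]
      constructor <;> (rw [Nat.cast_sub h1]; push_cast; ring)
    rw [e] at h3
    rcases hsign (fseg y) with h4 | h4 <;> rcases hsign (fseg (y - 1)) with h5 | h5 <;>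
      rw [h4, h5] at h3 <;> rw [h4, h5] <;> omega
  have hd := master (n₀ + y₀) n₀ y₀ ε d le_rfl hn₀ hsign halt2 hm
  refine ⟨?_, ?_, ?_⟩
  · intro h0
    subst h0
    rw [hd, ADval, if_pos rfl]
  · intro hodd hne
    rw [hd, ADval, if_neg hne, if_pos (Nat.odd_iff.mp hodd), bind_pure_cast,
      Multiset.map_map]
    rfl
  · intro heven hne
    rw [hd, ADval, if_neg hne, if_neg (by rw [Nat.even_iff] at heven; omega),
      bind_pure_cast, Multiset.map_map]
    rfl

end AZ
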